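/- 𝔯, 𝔡 ≤ 𝔯_simult: every witness family for 𝔯_simult has cardinality at least the reaping number 𝔯 and at least the dominating number 𝔡. -/

import Mathlib

open Cardinal

/-- `B` reaps `X`: `B ⊆* X` or `B ⊆* ω ∖ X`. -/
def Reaps (B X : Set ℕ) : Prop := (B \ X).Finite ∨ (B ∩ X).Finite

/-- The cardinal 𝔯_simult. -/
noncomputable def rSimult : Cardinal :=
  sInf { c | ∃ F : Set (ℕ → Set ℕ),
    (∀ B ∈ F, ∀ n, (B n).Infinite) ∧
    (∀ A : ℕ → Set ℕ, (∀ n, (A n).Infinite) →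
      ∃ B ∈ F, (∃ n, B 0 ⊆ (A n)ᶜ) ∨ (∀ n, B n ⊆ A n)) ∧
    #F = c }

/-- The reaping number 𝔯. -/
noncomputable def frakR : Cardinal :=
  sInf { c | ∃ R : Set (Set ℕ), (∀ B ∈ R, B.Infinite) ∧
    (∀ x : Set ℕ, ∃ B ∈ R, Reaps B x) ∧ #R = c }

/-- The dominating number 𝔡 (w.r.t. eventual domination `≤*`). -/
noncomputable def frakD : Cardinal :=
  sInf { c | ∃ D : Set (ℕ → ℕ),
    (∀ x : ℕ → ℕ, ∃ y ∈ D, ∀ᶠ n in Filter.atTop, x n ≤ y n) ∧ #D = c }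

theorem stmt9 : frakR ≤ rSimult ∧ frakD ≤ rSimult := by
  have hne : { c | ∃ F : Set (ℕ → Set ℕ),
      (∀ B ∈ F, ∀ n, (B n).Infinite) ∧
      (∀ A : ℕ → Set ℕ, (∀ n, (A n).Infinite) →
        ∃ B ∈ F, (∃ n, B 0 ⊆ (A n)ᶜ) ∨ (∀ n, B n ⊆ A n)) ∧
      #F = c }.Nonempty := by
    refine ⟨_, {B : ℕ → Set ℕ | ∀ n, (B n).Infinite}, fun B hB => hB,
      fun A hA => ⟨A, hA, Or.inr fun n => subset_rfl⟩, rfl⟩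
  constructor
  · apply le_csInf hne
    rintro c ⟨F, hFinf, hF, rfl⟩
    have key : frakR ≤ #((fun B : ℕ → Set ℕ => B 0) '' F) := by
      apply csInf_le'
      refine ⟨(fun B : ℕ → Set ℕ => B 0) '' F, ?_, ?_, rfl⟩
      · rintro B ⟨C, hC, rfl⟩; exact hFinf C hC 0
      · intro x
        by_cases hx : x.Infinite ∧ xᶜ.Infinite
        · obtain ⟨B, hB, hcase⟩ := hF (fun _ => x) (fun _ => hx.1)
          refine ⟨B 0, ⟨B, hB, rfl⟩, ?_⟩
          rcases hcase with ⟨n, hn⟩ | h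
          · right
            refine Set.Finite.subset (Set.finite_empty) ?_
            rintro m ⟨h1, h2⟩; exact hn h1 h2
          · left
            refine Set.Finite.subset (Set.finite_empty) ?_
            rintro m ⟨h1, h2⟩; exact h2 (h 0 h1)
        · obtain ⟨B, hB, -⟩ := hF (fun _ => Set.univ) (fun _ => Set.infinite_univ)
          refine ⟨B 0, ⟨B, hB, rfl⟩, ?_⟩
          rw [not_and_or, Set.not_infinite, Set.not_infinite] at hx
          rcases hx with hx | hx
          · right; exact hx.subset Set.inter_subset_right
          · left; exact hx.subset fun m hm => hm.2
    exact key.trans Cardinal.mk_image_le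
  · apply le_csInf hne
    rintro c ⟨F, hFinf, hF, rfl⟩
    have key : frakD ≤ #((fun (B : ℕ → Set ℕ) (n : ℕ) => sInf (B n)) '' F) := by
      apply csInf_le'
      refine ⟨_, ?_, rfl⟩
      intro x
      obtain ⟨B, hB, hcase⟩ := hF (fun n => {m | x n ≤ m}) (fun n => by
        exact Set.Ici_infinite (x n))
      rcases hcase with ⟨n, hn⟩ | h
      · exfalso
        have : (B 0).Finite := Set.Finite.subset (Set.finite_Iio (x n)) (by
          intro m hm
          have := hn hm
          simpa using this)
        exact hFinf B hB 0 this
      · refine ⟨_, ⟨B, hB, rfl⟩, Filter.Eventually.of_forall fun n => ?_⟩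
        have hmem : sInf (B n) ∈ B n := Nat.sInf_mem (hFinf B hB n).nonempty
        exact h n hmem
    exact key.trans Cardinal.mk_image_le
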